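/- arXiv:2307.14628 — 4 statements merged into one kernel-verified Lean document; each statement's English description precedes it below -/
import Mathlib

section
/- Equivalently in measure-theoretic form: for a, b, m ∈ ℝ and v, t > 0, the Gaussian mixture measure obtained by binding the Gaussian measure N(m, t) with the kernel μ ↦ N(aμ + b, v) equals the Gaussian measure N(am + b, v + a² t); that is, (gaussianReal m t).bind (fun μ => gaussianReal (a*μ + b) v) = gaussianReal (a*m + b) (v + a²*t). -/
open MeasureTheory ProbabilityTheory

open Real in
lemma gauss_key (a b m v t : ℝ) (hv : 0 < v) (ht : 0 < t) (x μ : ℝ) :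
    gaussianPDFReal (a * μ + b) v.toNNReal x * gaussianPDFReal m t.toNNReal μ =
      gaussianPDFReal (a * m + b) (v + a ^ 2 * t).toNNReal x *
        gaussianPDFReal ((a * t * (x - b) + v * m) / (v + a ^ 2 * t))
          (v * t / (v + a ^ 2 * t)).toNNReal μ := by
  have hV : 0 < v + a ^ 2 * t := by positivity
  have hw : 0 < v * t / (v + a ^ 2 * t) := by positivity
  simp only [gaussianPDFReal, Real.coe_toNNReal _ hv.le, Real.coe_toNNReal _ ht.le,
    Real.coe_toNNReal _ hV.le, Real.coe_toNNReal _ hw.le]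
  rw [mul_mul_mul_comm, mul_mul_mul_comm ((√(2 * π * (v + a ^ 2 * t)))⁻¹), ← Real.exp_add,
    ← Real.exp_add, ← mul_inv, ← mul_inv, ← Real.sqrt_mul (by positivity),
    ← Real.sqrt_mul (by positivity)]
  congr 1
  · congr 2
    field_simp
  · rw [Real.exp_eq_exp]
    field_simp
    ring

/-- Affine Gaussian mixture identity in measure-theoretic form: binding the Gaussian measure
`N(m, t)` with the kernel `μ ↦ N(aμ + b, v)` yields the Gaussian measure `N(am + b, v + a² t)`. -/
theorem gaussian_bind_affine (a b m : ℝ) (v t : ℝ) (hv : 0 < v) (ht : 0 < t) :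
    (gaussianReal m t.toNNReal).bind
        (fun μ => gaussianReal (a * μ + b) v.toNNReal) =
      gaussianReal (a * m + b) (v + a ^ 2 * t).toNNReal := by
  have hV : 0 < v + a ^ 2 * t := by positivity
  have hv' : v.toNNReal ≠ 0 := (Real.toNNReal_pos.mpr hv).ne'
  have ht' : t.toNNReal ≠ 0 := (Real.toNNReal_pos.mpr ht).ne'
  have hV' : (v + a ^ 2 * t).toNNReal ≠ 0 := (Real.toNNReal_pos.mpr hV).ne'
  have hjoint : Measurable (fun p : ℝ × ℝ => gaussianPDF (a * p.1 + b) v.toNNReal p.2) := by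
    unfold gaussianPDF gaussianPDFReal
    fun_prop
  have hκ : Measurable (fun μ : ℝ => gaussianReal (a * μ + b) v.toNNReal) := by
    refine Measure.measurable_of_measurable_coe _ (fun s hs => ?_)
    simp_rw [gaussianReal_apply _ hv' s]
    exact hjoint.lintegral_prod_right'
  have hinner : ∀ x : ℝ, (∫⁻ μ, gaussianPDF m t.toNNReal μ * gaussianPDF (a * μ + b) v.toNNReal x)
      = gaussianPDF (a * m + b) (v + a ^ 2 * t).toNNReal x := by
    intro x
    have hw : 0 < v * t / (v + a ^ 2 * t) := by positivity
    have hw' : (v * t / (v + a ^ 2 * t)).toNNReal ≠ 0 := (Real.toNNReal_pos.mpr hw).ne'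
    calc (∫⁻ μ, gaussianPDF m t.toNNReal μ * gaussianPDF (a * μ + b) v.toNNReal x)
        = ∫⁻ μ, gaussianPDF (a * m + b) (v + a ^ 2 * t).toNNReal x *
            gaussianPDF ((a * t * (x - b) + v * m) / (v + a ^ 2 * t))
              (v * t / (v + a ^ 2 * t)).toNNReal μ := by
          refine lintegral_congr fun μ => ?_
          simp only [gaussianPDF]
          rw [← ENNReal.ofReal_mul (gaussianPDFReal_nonneg _ _ _),
            ← ENNReal.ofReal_mul (gaussianPDFReal_nonneg _ _ _),
            mul_comm (gaussianPDFReal m _ μ), gauss_key a b m v t hv ht x μ]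
      _ = gaussianPDF (a * m + b) (v + a ^ 2 * t).toNNReal x := by
          rw [lintegral_const_mul _ (measurable_gaussianPDF _ _),
            lintegral_gaussianPDF_eq_one _ hw', mul_one]
  ext s hs
  rw [Measure.bind_apply hs hκ.aemeasurable]
  have hg : Measurable (fun μ : ℝ => gaussianReal (a * μ + b) v.toNNReal s) :=
    (Measure.measurable_coe hs).comp hκ
  rw [gaussianReal_of_var_ne_zero m ht',
    lintegral_withDensity_eq_lintegral_mul _ (measurable_gaussianPDF _ _) hg]
  simp only [Pi.mul_apply]
  calc (∫⁻ μ, gaussianPDF m t.toNNReal μ * gaussianReal (a * μ + b) v.toNNReal s)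
      = ∫⁻ μ, ∫⁻ x in s, gaussianPDF m t.toNNReal μ * gaussianPDF (a * μ + b) v.toNNReal x := by
        refine lintegral_congr fun μ => ?_
        rw [gaussianReal_apply _ hv' s, lintegral_const_mul _ (measurable_gaussianPDF _ _)]
    _ = ∫⁻ x in s, ∫⁻ μ, gaussianPDF m t.toNNReal μ * gaussianPDF (a * μ + b) v.toNNReal x := by
        refine lintegral_lintegral_swap ?_
        exact ((measurable_gaussianPDF m t.toNNReal).comp measurable_fst |>.mul hjoint).aemeasurable
    _ = ∫⁻ x in s, gaussianPDF (a * m + b) (v + a ^ 2 * t).toNNReal x := by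
        exact lintegral_congr fun x => hinner x
    _ = gaussianReal (a * m + b) (v + a ^ 2 * t).toNNReal s := (gaussianReal_apply _ hV' s).symm
end

section
/- Proposition 2, part 2 (variance bound for the hierarchical Bayesian estimator): let N_F ≥ 1, σ_β, σ_μ > 0, s_1,…,s_{N_F} > 0, β_1,…,β_{N_F} ∈ ℝ, and let ȳ_1,…,ȳ_{N_F} be independent real random variables with ȳ_j distributed as Normal(β_j, s_j²). Then for each f: Var(β̂_f) ≤ s_f²/(1 + s_f²/σ_β²)² + 2σ_β²/(1 + σ_β²/s_f²)² + (1 + σ_β²/s_f²)^{-2} Σ_{j=1}^{N_F} w_j² s_j². -/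
open Real Finset MeasureTheory ProbabilityTheory
open scoped NNReal ENNReal


lemma integrable_sq_mul_exp_neg_mul_sq {b : ℝ} (hb : 0 < b) :
    Integrable (fun x : ℝ => x ^ 2 * rexp (-b * x ^ 2)) := by
  have h := (integrable_exp_neg_mul_sq (half_pos hb)).const_mul (2 / b)
  refine h.mono' ?_ ?_
  · exact (continuous_pow 2).aestronglyMeasurable.mul
      (continuous_exp.comp (continuous_const.mul (continuous_pow 2))).aestronglyMeasurable
  · filter_upwards with x
    have h1 : x ^ 2 ≤ (2 / b) * rexp (b / 2 * x ^ 2) := by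
      have := Real.add_one_le_exp (b / 2 * x ^ 2)
      have hp : (0:ℝ) ≤ b / 2 * x ^ 2 := by positivity
      rw [div_mul_eq_mul_div, le_div_iff₀ hb]
      nlinarith [Real.exp_pos (b / 2 * x ^ 2)]
    have h2 : rexp (b / 2 * x ^ 2) * rexp (-b * x ^ 2) = rexp (-(b / 2) * x ^ 2) := by
      rw [← Real.exp_add]; ring_nf
    rw [Real.norm_eq_abs, abs_of_nonneg (by positivity)]
    calc x ^ 2 * rexp (-b * x ^ 2) ≤ (2 / b) * rexp (b / 2 * x ^ 2) * rexp (-b * x ^ 2) := by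
          exact mul_le_mul_of_nonneg_right h1 (Real.exp_pos _).le
      _ = 2 / b * rexp (-(b / 2) * x ^ 2) := by rw [mul_assoc, h2]

lemma integral_mul_exp_neg_mul_sq {b : ℝ} (hb : 0 < b) :
    ∫ x : ℝ, x * rexp (-b * x ^ 2) = 0 := by
  have hd : ∀ x : ℝ, HasDerivAt (fun x : ℝ => -(2 * b)⁻¹ * rexp (-b * x ^ 2))
      (x * rexp (-b * x ^ 2)) x := by
    intro x
    have : HasDerivAt (fun x : ℝ => -b * x ^ 2) (-b * (2 * x)) x := by
      simpa using ((hasDerivAt_pow 2 x).const_mul (-b))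
    have := (this.exp).const_mul (-(2 * b)⁻¹)
    refine this.congr_deriv ?_
    field_simp
  exact integral_eq_zero_of_hasDerivAt_of_integrable hd
    (integrable_mul_exp_neg_mul_sq hb)
    ((integrable_exp_neg_mul_sq hb).const_mul _)

lemma integral_sq_mul_exp_neg_mul_sq {b : ℝ} (hb : 0 < b) :
    ∫ x : ℝ, x ^ 2 * rexp (-b * x ^ 2) = (2 * b)⁻¹ * Real.sqrt (π / b) := by
  have hd : ∀ x : ℝ, HasDerivAt (fun x : ℝ => -(2 * b)⁻¹ * (x * rexp (-b * x ^ 2)))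
      (x ^ 2 * rexp (-b * x ^ 2) - (2 * b)⁻¹ * rexp (-b * x ^ 2)) x := by
    intro x
    have h1 : HasDerivAt (fun x : ℝ => -b * x ^ 2) (-b * (2 * x)) x := by
      simpa using ((hasDerivAt_pow 2 x).const_mul (-b))
    have h2 := (hasDerivAt_id x).mul h1.exp
    have := h2.const_mul (-(2 * b)⁻¹)
    refine this.congr_deriv ?_
    simp only [id]
    field_simp
    ring
  have hint : Integrable (fun x : ℝ => x ^ 2 * rexp (-b * x ^ 2)
      - (2 * b)⁻¹ * rexp (-b * x ^ 2)) :=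
    (integrable_sq_mul_exp_neg_mul_sq hb).sub ((integrable_exp_neg_mul_sq hb).const_mul _)
  have h0 := integral_eq_zero_of_hasDerivAt_of_integrable hd hint
    ((integrable_mul_exp_neg_mul_sq hb).const_mul _)
  rw [integral_sub (integrable_sq_mul_exp_neg_mul_sq hb)
    ((integrable_exp_neg_mul_sq hb).const_mul _), sub_eq_zero] at h0
  rw [h0, integral_const_mul, integral_gaussian]

section
variable {m : ℝ} {v : ℝ≥0}

lemma gaussianReal_eq_withDensity (hv : v ≠ 0) :
    gaussianReal m v
      = volume.withDensity (fun x => ((gaussianPDFReal m v x).toNNReal : ℝ≥0∞)) := by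
  rw [gaussianReal_of_var_ne_zero m hv]
  rfl

lemma integral_gaussianReal_eq (hv : v ≠ 0) (g : ℝ → ℝ) :
    ∫ x, g x ∂(gaussianReal m v) = ∫ x, gaussianPDFReal m v x * g x := by
  rw [gaussianReal_eq_withDensity hv,
    integral_withDensity_eq_integral_smul
      (measurable_gaussianPDFReal m v).real_toNNReal g]
  congr 1
  ext x
  simp [NNReal.smul_def, Real.coe_toNNReal _ (gaussianPDFReal_nonneg m v x)]

lemma integrable_gaussianReal_iff (hv : v ≠ 0) {g : ℝ → ℝ}
    (hg : AEStronglyMeasurable g volume) :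
    Integrable g (gaussianReal m v) ↔
      Integrable (fun x => gaussianPDFReal m v x * g x) volume := by
  rw [gaussianReal_eq_withDensity hv,
    integrable_withDensity_iff_integrable_smul
      (measurable_gaussianPDFReal m v).real_toNNReal]
  constructor <;> intro h <;> refine h.congr (Filter.Eventually.of_forall fun x => ?_) <;>
    simp [NNReal.smul_def, Real.coe_toNNReal _ (gaussianPDFReal_nonneg m v x)]

lemma gaussianPDFReal_eq (x : ℝ) :
    gaussianPDFReal m v x = (√(2 * π * v))⁻¹ * rexp (-(2 * (v:ℝ))⁻¹ * (x - m) ^ 2) := by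
  rw [gaussianPDFReal]
  congr 1
  rw [neg_div, div_eq_inv_mul]
  ring_nf

end


section
variable {m : ℝ} {v : ℝ≥0}

lemma gaussian_moments (hv : v ≠ 0) :
    (∫ x, x ∂(gaussianReal m v)) = m ∧
    (∫ x, x ^ 2 ∂(gaussianReal m v)) = (v : ℝ) + m ^ 2 ∧
    MemLp id 2 (gaussianReal m v) := by
  have hV : (0:ℝ) < (v:ℝ) := by
    have := v.coe_nonneg
    rcases this.lt_or_eq with h | h
    · exact h
    · exact absurd (by exact_mod_cast h.symm) hv
  set V : ℝ := (v:ℝ) with hVdef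
  set b : ℝ := (2 * V)⁻¹ with hbdef
  have hb : 0 < b := by positivity
  set c : ℝ := (√(2 * π * V))⁻¹ with hcdef
  have hpdf : ∀ x : ℝ, gaussianPDFReal m v (x + m) = c * rexp (-b * x ^ 2) := by
    intro x
    rw [gaussianPDFReal]
    have harg : -(x + m - m) ^ 2 / (2 * (v:ℝ)) = -b * x ^ 2 := by
      rw [hbdef, hVdef]; field_simp; try ring
    rw [harg]
  have hnorm : c * √(π / b) = 1 := by
    have h1 := integral_gaussianPDFReal_eq_one m hv
    have h2 := integral_add_right_eq_self (μ := volume) (fun x => gaussianPDFReal m v x) m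
    simp only [hpdf] at h2
    rw [integral_const_mul, integral_gaussian, h1] at h2
    exact h2
  have hib : Integrable (fun x : ℝ => rexp (-b * x ^ 2)) := integrable_exp_neg_mul_sq hb
  have hib1 : Integrable (fun x : ℝ => x * rexp (-b * x ^ 2)) := integrable_mul_exp_neg_mul_sq hb
  have hib2 : Integrable (fun x : ℝ => x ^ 2 * rexp (-b * x ^ 2)) :=
    integrable_sq_mul_exp_neg_mul_sq hb
  have hm1 : (∫ x, x ∂(gaussianReal m v)) = m := by
    rw [integral_gaussianReal_eq hv]
    have h2 := integral_add_right_eq_self (μ := volume) (fun x => gaussianPDFReal m v x * x) m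
    rw [← h2]
    have heq : (fun x : ℝ => gaussianPDFReal m v (x + m) * (x + m))
        = fun x : ℝ => c * (x * rexp (-b * x ^ 2)) + m * (c * rexp (-b * x ^ 2)) := by
      funext x; rw [hpdf]; ring
    rw [heq, integral_add (hib1.const_mul c) ((hib.const_mul c).const_mul m),
      integral_const_mul, integral_const_mul, integral_const_mul,
      integral_mul_exp_neg_mul_sq hb, integral_gaussian, hnorm]
    ring
  have hm2 : (∫ x, x ^ 2 ∂(gaussianReal m v)) = V + m ^ 2 := by
    rw [integral_gaussianReal_eq hv]
    have h2 := integral_add_right_eq_self (μ := volume) (fun x => gaussianPDFReal m v x * x ^ 2) m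
    rw [← h2]
    have heq : (fun x : ℝ => gaussianPDFReal m v (x + m) * (x + m) ^ 2)
        = fun x : ℝ => (c * (x ^ 2 * rexp (-b * x ^ 2)) + (2 * m) * (c * (x * rexp (-b * x ^ 2))))
          + m ^ 2 * (c * rexp (-b * x ^ 2)) := by
      funext x; rw [hpdf]; ring
    have hA : Integrable (fun x : ℝ => c * (x ^ 2 * rexp (-b * x ^ 2))
        + (2 * m) * (c * (x * rexp (-b * x ^ 2)))) volume :=
      (hib2.const_mul c).add ((hib1.const_mul c).const_mul (2*m))
    rw [heq, integral_add hA ((hib.const_mul c).const_mul (m ^ 2)),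
      integral_add (hib2.const_mul c) ((hib1.const_mul c).const_mul (2*m)),
      integral_const_mul, integral_const_mul, integral_const_mul]
    simp only [integral_const_mul, integral_mul_exp_neg_mul_sq hb,
      integral_sq_mul_exp_neg_mul_sq hb, integral_gaussian]
    have h2b : (2 * b)⁻¹ = V := by rw [hbdef]; field_simp
    calc c * ((2 * b)⁻¹ * √(π / b)) + 2 * m * (c * 0) + m ^ 2 * (c * √(π / b))
        = (2 * b)⁻¹ * (c * √(π / b)) + m ^ 2 * (c * √(π / b)) := by ring
      _ = V + m ^ 2 := by rw [hnorm, h2b]; ring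
  have hmem : MemLp (id : ℝ → ℝ) 2 (gaussianReal m v) := by
    rw [memLp_two_iff_integrable_sq aestronglyMeasurable_id]
    have hmeas : AEStronglyMeasurable (fun x : ℝ => (id x) ^ 2) volume :=
      (continuous_pow 2).aestronglyMeasurable
    have : Integrable (fun x => gaussianPDFReal m v x * x ^ 2) volume := by
      have hF : Integrable (fun x : ℝ => gaussianPDFReal m v (x + m) * (x + m) ^ 2) := by
        have heq : (fun x : ℝ => gaussianPDFReal m v (x + m) * (x + m) ^ 2)
            = fun x : ℝ => (c * (x ^ 2 * rexp (-b * x ^ 2))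
              + (2 * m) * (c * (x * rexp (-b * x ^ 2)))) + m ^ 2 * (c * rexp (-b * x ^ 2)) := by
          funext x; rw [hpdf]; ring
        rw [heq]
        exact ((hib2.const_mul c).add ((hib1.const_mul c).const_mul (2*m))).add
          ((hib.const_mul c).const_mul (m ^ 2))
      have := hF.comp_add_right (-m)
      refine this.congr (Filter.Eventually.of_forall fun x => ?_)
      simp
    exact (integrable_gaussianReal_iff hv hmeas).mpr this
  exact ⟨hm1, hm2, hmem⟩
end


/-- Proposition 2, part 2: variance bound for the hierarchical Bayesian estimator `β̂_f`.
If `ȳ_1, …, ȳ_N` are independent with `ȳ_j ~ Normal(β_j, s_j²)`, then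
`Var(β̂_f) ≤ s_f²/(1 + s_f²/σβ²)² + 2σβ²/(1 + σβ²/s_f²)² + (1 + σβ²/s_f²)⁻² Σ_j w_j² s_j²`. -/
theorem variance_bound_hierarchical_bayes_estimator
    (N : ℕ) (hN : 1 ≤ N) (σβ σμ : ℝ) (hσβ : 0 < σβ) (hσμ : 0 < σμ)
    (s : Fin N → ℝ) (hs : ∀ j, 0 < s j) (β : Fin N → ℝ)
    (Ω : Type*) [MeasurableSpace Ω] (P : Measure Ω) [IsProbabilityMeasure P]
    (y : Fin N → Ω → ℝ)
    (hindep : iIndepFun y P)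
    (hlaw : ∀ j, P.map (y j) = gaussianReal (β j) (((s j) ^ 2).toNNReal))
    (f : Fin N) :
    variance (fun ω => y f ω / (1 + (s f) ^ 2 / σβ ^ 2)
        + (1 / (1 + σβ ^ 2 / (s f) ^ 2)) *
          ∑ j, ((σβ ^ 2 + (s j) ^ 2)⁻¹ /
              ((σμ ^ 2)⁻¹ + ∑ k, (σβ ^ 2 + (s k) ^ 2)⁻¹)) * y j ω) P ≤
      (s f) ^ 2 / (1 + (s f) ^ 2 / σβ ^ 2) ^ 2
        + 2 * σβ ^ 2 / (1 + σβ ^ 2 / (s f) ^ 2) ^ 2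
        + ((1 + σβ ^ 2 / (s f) ^ 2) ^ 2)⁻¹ *
          ∑ j, ((σβ ^ 2 + (s j) ^ 2)⁻¹ /
              ((σμ ^ 2)⁻¹ + ∑ k, (σβ ^ 2 + (s k) ^ 2)⁻¹)) ^ 2 * (s j) ^ 2 := by
  classical
  set W : ℝ := (σμ ^ 2)⁻¹ + ∑ k, (σβ ^ 2 + s k ^ 2)⁻¹ with hWdef
  set w : Fin N → ℝ := fun j => (σβ ^ 2 + s j ^ 2)⁻¹ / W with hwdef
  set A : ℝ := 1 + s f ^ 2 / σβ ^ 2 with hAdef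
  set B : ℝ := 1 + σβ ^ 2 / s f ^ 2 with hBdef
  have hsf := hs f
  have hApos : 0 < A := by positivity
  have hBpos : 0 < B := by positivity
  have hWpos : 0 < W := by positivity
  set d : Fin N → ℝ := fun j => (if j = f then A⁻¹ else 0) + (1 / B) * w j with hddef
  -- measurability and moments of y j
  have haes : ∀ j, AEMeasurable (y j) P := by
    intro j
    refine aemeasurable_of_map_neZero ?_
    rw [hlaw j]
    infer_instance
  have hvne : ∀ j, ((s j ^ 2).toNNReal : ℝ≥0) ≠ 0 := by
    intro j h
    rw [Real.toNNReal_eq_zero] at h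
    nlinarith [hs j]
  have hvco : ∀ j, (((s j ^ 2).toNNReal : ℝ≥0) : ℝ) = s j ^ 2 := fun j =>
    Real.coe_toNNReal _ (sq_nonneg _)
  have hmem : ∀ j, MemLp (y j) 2 P := by
    intro j
    have h := (gaussian_moments (m := β j) (hvne j)).2.2
    rw [← hlaw j] at h
    exact (memLp_map_measure_iff aestronglyMeasurable_id (haes j)).mp h
  have hvar : ∀ j, variance (y j) P = s j ^ 2 := by
    intro j
    obtain ⟨h1, h2, _⟩ := gaussian_moments (m := β j) (hvne j)
    rw [← hlaw j, integral_map (f := fun x : ℝ => x) (haes j) measurable_id.aestronglyMeasurable] at h1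
    rw [← hlaw j, integral_map (f := fun x : ℝ => x ^ 2) (haes j) (measurable_id.pow_const 2).aestronglyMeasurable] at h2
    rw [variance_eq_sub (hmem j)]
    have hX2 : P[(y j) ^ 2] = ∫ ω, (y j ω) ^ 2 ∂P := by rfl
    rw [hX2]
    rw [h2, h1, hvco j]
    ring
  -- rewrite the estimator as a single linear combination
  have hfun : (fun ω => y f ω / A + (1 / B) * ∑ j, w j * y j ω)
      = ∑ j, (fun ω => d j * y j ω) := by
    funext ω
    rw [Finset.sum_apply]
    have hterm : ∀ j, d j * y j ω
        = (if j = f then A⁻¹ * y j ω else 0) + 1 / B * (w j * y j ω) := by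
      intro j
      simp only [hddef]
      split <;> ring
    rw [Finset.sum_congr rfl (fun j _ => hterm j), Finset.sum_add_distrib,
      Finset.sum_ite_eq' univ f (fun j => A⁻¹ * y j ω), ← Finset.mul_sum]
    simp only [mem_univ, if_true]
    rw [div_eq_mul_inv, mul_comm (y f ω) A⁻¹]
  -- variance of the sum
  have hpair : Set.Pairwise ↑(univ : Finset (Fin N))
      (fun i j => IndepFun (fun ω => d i * y i ω) (fun ω => d j * y j ω) P) := by
    intro i _ j _ hij
    exact (hindep.indepFun hij).comp (measurable_const_mul (d i)) (measurable_const_mul (d j))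
  have hmemd : ∀ i ∈ (univ : Finset (Fin N)), MemLp (fun ω => d i * y i ω) 2 P :=
    fun i _ => (hmem i).const_mul (d i)
  have hvsum : variance (fun ω => y f ω / A + (1 / B) * ∑ j, w j * y j ω) P
      = ∑ j, d j ^ 2 * s j ^ 2 := by
    rw [hfun, IndepFun.variance_sum hmemd hpair]
    refine Finset.sum_congr rfl fun j _ => ?_
    rw [variance_const_mul, hvar j]
  rw [hvsum]
  -- the deterministic inequality
  have hwf1 : w f ≤ 1 := by
    rw [hwdef]
    rw [div_le_one hWpos, hWdef]
    have h1 : (σβ ^ 2 + s f ^ 2)⁻¹ ≤ ∑ k, (σβ ^ 2 + s k ^ 2)⁻¹ :=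
      Finset.single_le_sum (f := fun k => (σβ ^ 2 + s k ^ 2)⁻¹)
        (fun k _ => by positivity) (mem_univ f)
    have h2 : (0:ℝ) ≤ (σμ ^ 2)⁻¹ := by positivity
    linarith
  have hwf0 : 0 ≤ w f := by positivity
  have hkey : A⁻¹ * s f ^ 2 = σβ ^ 2 * B⁻¹ := by
    rw [hAdef, hBdef]
    field_simp
    ring
  -- split the sums at f
  rw [← Finset.add_sum_erase _ (fun j => d j ^ 2 * s j ^ 2) (mem_univ f),
    ← Finset.add_sum_erase _ (fun j => w j ^ 2 * s j ^ 2) (mem_univ f)]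
  have htail : ∑ j ∈ univ.erase f, d j ^ 2 * s j ^ 2
      = ∑ j ∈ univ.erase f, (B ^ 2)⁻¹ * (w j ^ 2 * s j ^ 2) := by
    refine Finset.sum_congr rfl fun j hj => ?_
    have hjf : j ≠ f := (Finset.mem_erase.mp hj).1
    simp only [hddef, hjf, if_false, zero_add]
    field_simp
    try ring
  have hhead : d f ^ 2 * s f ^ 2
      ≤ s f ^ 2 / A ^ 2 + 2 * σβ ^ 2 / B ^ 2 + (B ^ 2)⁻¹ * (w f ^ 2 * s f ^ 2) := by
    simp only [hddef, eq_self_iff_true, if_true]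
    have e1 : (A⁻¹ + 1 / B * w f) ^ 2 * s f ^ 2
        = A⁻¹ ^ 2 * s f ^ 2 + 2 * (A⁻¹ * s f ^ 2) * B⁻¹ * w f + (B ^ 2)⁻¹ * (w f ^ 2 * s f ^ 2) := by
      rw [inv_pow]
      field_simp
      ring
    rw [e1, hkey]
    have e2 : s f ^ 2 / A ^ 2 = A⁻¹ ^ 2 * s f ^ 2 := by
      rw [inv_pow, div_eq_mul_inv]; ring
    have e3 : 2 * (σβ ^ 2 * B⁻¹) * B⁻¹ * w f ≤ 2 * σβ ^ 2 / B ^ 2 := by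
      have h4 : 2 * (σβ ^ 2 * B⁻¹) * B⁻¹ * w f ≤ 2 * (σβ ^ 2 * B⁻¹) * B⁻¹ * 1 :=
        mul_le_mul_of_nonneg_left hwf1 (by positivity)
      calc 2 * (σβ ^ 2 * B⁻¹) * B⁻¹ * w f ≤ 2 * (σβ ^ 2 * B⁻¹) * B⁻¹ * 1 := h4
        _ = 2 * σβ ^ 2 / B ^ 2 := by rw [div_eq_mul_inv, ← inv_pow]; ring
    linarith [e3, e2.ge, e2.le]
  rw [htail, ← Finset.mul_sum]
  linarith [hhead]
end

section
/- Theorem 3, part 2: let N_F ≥ 1, σ_β, σ_μ > 0, s_1,…,s_{N_F} > 0, β_1,…,β_{N_F} ∈ ℝ, and let ȳ_1,…,ȳ_{N_F} be independent with ȳ_j ~ Normal(β_j, s_j²). Fix f and set h := s_f²/σ_β². If s_j²/σ_β² = h for all j = 1,…,N_F, then Var(β̂_f) ≤ c₂(h) · s_f², where c₂(h) = 1/(1+h)² + 2/(h(1 + 1/h)²) + 1/(1 + 1/h)². -/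
open Real Finset MeasureTheory ProbabilityTheory

section GaussAux

variable {v : NNReal}

lemma gauss_integral_eq (m : ℝ) (hv : v ≠ 0) (g : ℝ → ℝ) :
    ∫ x, g x ∂(gaussianReal m v) = ∫ x, gaussianPDFReal m v x * g x := by
  rw [gaussianReal_of_var_ne_zero m hv]
  have hd : gaussianPDF m v = fun x => ((Real.toNNReal (gaussianPDFReal m v x) : NNReal) : ENNReal) := by
    funext x; rw [gaussianPDF_def]; rfl
  rw [hd, integral_withDensity_eq_integral_smul ((measurable_gaussianPDFReal m v).real_toNNReal)]
  congr 1 with x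
  rw [NNReal.smul_def, smul_eq_mul, Real.coe_toNNReal _ (gaussianPDFReal_nonneg m v x)]

lemma pdf0_rewrite (hv : v ≠ 0) (x : ℝ) :
    gaussianPDFReal 0 v x = (√(2 * π * v))⁻¹ * rexp (-(2 * (v:ℝ))⁻¹ * x ^ 2) := by
  have hv' : (0:ℝ) < v := lt_of_le_of_ne (v.coe_nonneg) (by exact_mod_cast (Ne.symm hv))
  rw [gaussianPDFReal]
  congr 1
  rw [sub_zero]
  congr 1
  field_simp

lemma integrable_pdf0_mul_x (hv : v ≠ 0) :
    Integrable (fun x => gaussianPDFReal 0 v x * x) := by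
  have hv' : (0:ℝ) < v := lt_of_le_of_ne (v.coe_nonneg) (by exact_mod_cast (Ne.symm hv))
  have hb : (0:ℝ) < (2 * (v:ℝ))⁻¹ := by positivity
  have h1 := (integrable_rpow_mul_exp_neg_mul_sq hb (by norm_num : (-1:ℝ) < 1)).const_mul
    (√(2 * π * v))⁻¹
  simp only [rpow_one] at h1
  exact h1.congr (Filter.Eventually.of_forall fun x => by simp only [pdf0_rewrite hv]; ring)

lemma integrable_pdf0_mul_sq (hv : v ≠ 0) :
    Integrable (fun x => gaussianPDFReal 0 v x * x ^ 2) := by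
  have hv' : (0:ℝ) < v := lt_of_le_of_ne (v.coe_nonneg) (by exact_mod_cast (Ne.symm hv))
  have hb : (0:ℝ) < (2 * (v:ℝ))⁻¹ := by positivity
  have h1 := (integrable_rpow_mul_exp_neg_mul_sq hb (by norm_num : (-1:ℝ) < 2)).const_mul
    (√(2 * π * v))⁻¹
  simp only [show (2:ℝ) = ((2:ℕ):ℝ) by norm_num, Real.rpow_natCast] at h1
  exact h1.congr (Filter.Eventually.of_forall fun x => by simp only [pdf0_rewrite hv]; ring)

lemma integrable_pdf0_poly (hv : v ≠ 0) (a b c : ℝ) :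
    Integrable (fun x => gaussianPDFReal 0 v x * (a * x ^ 2 + b * x + c)) := by
  have h := (((integrable_pdf0_mul_sq hv).const_mul a).add
    ((integrable_pdf0_mul_x hv).const_mul b)).add ((integrable_gaussianPDFReal 0 v).const_mul c)
  exact h.congr (Filter.Eventually.of_forall fun x => by simp; ring)

lemma int_pdf0_mul_x {v : NNReal} (hv : v ≠ 0) :
    ∫ x, gaussianPDFReal 0 v x * x = 0 := by
  have hodd : ∀ x : ℝ, gaussianPDFReal 0 v (-x) * (-x) = -(gaussianPDFReal 0 v x * x) := by
    intro x
    have : gaussianPDFReal 0 v (-x) = gaussianPDFReal 0 v x := by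
      simp [gaussianPDFReal, neg_sq]
    rw [this]; ring
  have h1 := integral_neg_eq_self (fun x => gaussianPDFReal 0 v x * x) (volume : Measure ℝ)
  simp only [hodd, integral_neg] at h1
  linarith

lemma int_pdf0_mul_sq (hv : v ≠ 0) :
    ∫ x, gaussianPDFReal 0 v x * x ^ 2 = (v:ℝ) := by
  have hv' : (0:ℝ) < v := lt_of_le_of_ne (v.coe_nonneg) (by exact_mod_cast (Ne.symm hv))
  have hb : (0:ℝ) < (2 * (v:ℝ))⁻¹ := by positivity
  have key : ∫ x : ℝ, x ^ 2 * rexp (-(2 * (v:ℝ))⁻¹ * x ^ 2)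
      = 2 * (((2 * (v:ℝ))⁻¹) ^ (-(2+1:ℝ)/2) * (1/2) * Real.Gamma (((2:ℝ)+1)/2)) := by
    have hca := integral_comp_abs (f := fun t : ℝ => t ^ 2 * rexp (-(2 * (v:ℝ))⁻¹ * t ^ 2))
    simp only [sq_abs] at hca
    rw [hca, ← integral_rpow_mul_exp_neg_mul_rpow (by norm_num : (0:ℝ) < 2)
      (by norm_num : (-1:ℝ) < 2) hb]
    congr 1
    refine setIntegral_congr_fun measurableSet_Ioi (fun x hx => ?_)
    have h2 : x ^ (2:ℝ) = x ^ 2 := by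
      rw [show (2:ℝ) = ((2:ℕ):ℝ) by norm_num, Real.rpow_natCast]
    rw [h2]
  rw [show (∫ x, gaussianPDFReal 0 v x * x ^ 2)
      = ∫ x, (√(2 * π * v))⁻¹ * (x ^ 2 * rexp (-(2 * (v:ℝ))⁻¹ * x ^ 2)) by
        congr 1 with x; rw [pdf0_rewrite hv x]; ring,
    integral_const_mul, key]
  have hΓ : Real.Gamma (((2:ℝ)+1)/2) = (1/2) * √π := by
    rw [show (((2:ℝ)+1)/2 : ℝ) = 1/2 + 1 by norm_num, Real.Gamma_add_one (by norm_num),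
      Real.Gamma_one_half_eq]
  have hbpow : ((2 * (v:ℝ))⁻¹) ^ (-(2+1:ℝ)/2) = (2 * (v:ℝ)) * √(2 * (v:ℝ)) := by
    rw [show (-(2+1:ℝ)/2) = -((3:ℝ)/2) by norm_num, Real.rpow_neg (by positivity),
      Real.inv_rpow (by positivity), inv_inv,
      show (3:ℝ)/2 = 1 + 1/2 by norm_num, Real.rpow_add (by positivity), Real.rpow_one,
      ← Real.sqrt_eq_rpow]
  rw [hΓ, hbpow, show 2 * π * (v:ℝ) = π * (2 * v) by ring, Real.sqrt_mul (le_of_lt pi_pos)]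
  have hA2 : √(2 * (v:ℝ)) * √(2 * (v:ℝ)) = 2 * (v:ℝ) := Real.mul_self_sqrt (by positivity)
  have hA0 : (0:ℝ) < √(2 * (v:ℝ)) := Real.sqrt_pos.mpr (by positivity)
  have hπ : (0:ℝ) < √π := Real.sqrt_pos.mpr pi_pos
  field_simp

lemma pdf_shift (m : ℝ) (x : ℝ) : gaussianPDFReal m v (x + m) = gaussianPDFReal 0 v x := by
  rw [gaussianPDFReal_add, sub_self]

lemma int_gauss_id (m : ℝ) (hv : v ≠ 0) : ∫ x, x ∂(gaussianReal m v) = m := by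
  rw [gauss_integral_eq m hv]
  have : (fun x => gaussianPDFReal m v x * x)
      = fun x => (fun y => gaussianPDFReal 0 v y * y + m * gaussianPDFReal 0 v y) (x - m) := by
    funext x
    have := pdf_shift (v := v) m (x - m)
    simp only [sub_add_cancel] at this
    simp only [this]
    ring
  rw [this, integral_sub_right_eq_self
    (fun y => gaussianPDFReal 0 v y * y + m * gaussianPDFReal 0 v y) m,
    integral_add (integrable_pdf0_mul_x hv) ((integrable_gaussianPDFReal 0 v).const_mul m),
    int_pdf0_mul_x hv, integral_const_mul, integral_gaussianPDFReal_eq_one 0 hv]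
  ring

lemma int_gauss_sq (m : ℝ) (hv : v ≠ 0) :
    ∫ x, x ^ 2 ∂(gaussianReal m v) = m ^ 2 + (v:ℝ) := by
  rw [gauss_integral_eq m hv]
  have : (fun x => gaussianPDFReal m v x * x ^ 2)
      = fun x => (fun y => gaussianPDFReal 0 v y * y ^ 2
          + ((2 * m) * (gaussianPDFReal 0 v y * y) + m ^ 2 * gaussianPDFReal 0 v y)) (x - m) := by
    funext x
    have := pdf_shift (v := v) m (x - m)
    simp only [sub_add_cancel] at this
    simp only [this]
    ring
  rw [this, integral_sub_right_eq_self
    (fun y => gaussianPDFReal 0 v y * y ^ 2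
      + ((2 * m) * (gaussianPDFReal 0 v y * y) + m ^ 2 * gaussianPDFReal 0 v y)) m,
    ]
  have hA : Integrable (fun x => gaussianPDFReal 0 v x * x ^ 2) := integrable_pdf0_mul_sq hv
  have hB : Integrable (fun x => 2 * m * (gaussianPDFReal 0 v x * x)) :=
    (integrable_pdf0_mul_x hv).const_mul _
  have hC : Integrable (fun x => m ^ 2 * gaussianPDFReal 0 v x) :=
    (integrable_gaussianPDFReal 0 v).const_mul _
  have hBC : Integrable
      (fun x => 2 * m * (gaussianPDFReal 0 v x * x) + m ^ 2 * gaussianPDFReal 0 v x) := hB.add hC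
  rw [integral_add hA hBC, integral_add hB hC,
    int_pdf0_mul_sq hv, integral_const_mul, integral_const_mul, int_pdf0_mul_x hv,
    integral_gaussianPDFReal_eq_one 0 hv]
  ring

lemma integrable_sq_gauss (m : ℝ) (hv : v ≠ 0) :
    Integrable (fun x => x ^ 2) (gaussianReal m v) := by
  rw [gaussianReal_of_var_ne_zero m hv]
  have hd : gaussianPDF m v = fun x => ((Real.toNNReal (gaussianPDFReal m v x) : NNReal) : ENNReal) := by
    funext x; rw [gaussianPDF_def]; rfl
  rw [hd, integrable_withDensity_iff_integrable_smul
    ((measurable_gaussianPDFReal m v).real_toNNReal)]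
  have h : Integrable (fun y => gaussianPDFReal 0 v y * (y + m) ^ 2) := by
    have := (integrable_pdf0_mul_sq hv).add
      (((integrable_pdf0_mul_x hv).const_mul (2 * m)).add
        ((integrable_gaussianPDFReal 0 v).const_mul (m ^ 2)))
    exact this.congr (Filter.Eventually.of_forall fun x => by simp only [Pi.add_apply]; ring)
  have h2 := h.comp_sub_right m
  refine h2.congr (Filter.Eventually.of_forall fun x => ?_)
  simp only [NNReal.smul_def, smul_eq_mul, Real.coe_toNNReal _ (gaussianPDFReal_nonneg m v x)]
  have := pdf_shift (v := v) m (x - m)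
  simp only [sub_add_cancel] at this
  rw [this, sub_add_cancel]

lemma memℒp_two_id_gauss (m : ℝ) (hv : v ≠ 0) :
    MemLp (id : ℝ → ℝ) 2 (gaussianReal m v) := by
  rw [memLp_two_iff_integrable_sq aestronglyMeasurable_id]
  exact integrable_sq_gauss m hv

variable {Ω : Type*} [MeasurableSpace Ω] {P : Measure Ω} [IsProbabilityMeasure P]

set_option linter.unusedSectionVars false in
lemma aemeasurable_of_map_gauss {X : Ω → ℝ} {m : ℝ} (hX : P.map X = gaussianReal m v) :
    AEMeasurable X P := by
  by_contra hc
  rw [Measure.map_of_not_aemeasurable hc] at hX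
  exact (IsProbabilityMeasure.ne_zero (gaussianReal m v)) hX.symm

lemma memℒp_of_map_gauss {X : Ω → ℝ} {m : ℝ} (hv : v ≠ 0)
    (hX : P.map X = gaussianReal m v) : MemLp X 2 P := by
  have ha := aemeasurable_of_map_gauss hX
  have := (memLp_map_measure_iff aestronglyMeasurable_id ha).mp
    (by rw [hX]; exact memℒp_two_id_gauss m hv)
  exact this

lemma variance_of_map_gauss {X : Ω → ℝ} {m : ℝ} (hv : v ≠ 0)
    (hX : P.map X = gaussianReal m v) : variance X P = (v:ℝ) := by
  have ha := aemeasurable_of_map_gauss hX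
  have hm := memℒp_of_map_gauss hv hX
  rw [variance_eq_sub hm]
  have h1 : P[X] = m := by
    have hmap := integral_map (φ := X) ha (f := fun x : ℝ => x) aestronglyMeasurable_id
    rw [hX, int_gauss_id m hv] at hmap
    exact hmap.symm
  have h2 : P[X ^ 2] = m ^ 2 + (v:ℝ) := by
    have hmap := integral_map (φ := X) ha (f := fun x : ℝ => x ^ 2)
      ((measurable_id.pow_const 2).aestronglyMeasurable)
    rw [hX, int_gauss_sq m hv] at hmap
    rw [show (X ^ 2 : Ω → ℝ) = fun ω => X ω ^ 2 from rfl]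
    exact hmap.symm
  rw [h1, h2]; ring

end GaussAux

/-- Theorem 3, part 2: with `h := s_f²/σβ²`, if `s_j²/σβ² = h` for all `j`, then
`Var(β̂_f) ≤ c₂(h) s_f²` where `c₂(h) = 1/(1+h)² + 2/(h(1 + 1/h)²) + 1/(1 + 1/h)²`. -/
theorem variance_bound_equal_uncertainties
    (N : ℕ) (hN : 1 ≤ N) (σβ σμ : ℝ) (hσβ : 0 < σβ) (hσμ : 0 < σμ)
    (s : Fin N → ℝ) (hs : ∀ j, 0 < s j) (β : Fin N → ℝ)
    (Ω : Type*) [MeasurableSpace Ω] (P : Measure Ω) [IsProbabilityMeasure P]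
    (y : Fin N → Ω → ℝ)
    (hindep : iIndepFun y P)
    (hlaw : ∀ j, P.map (y j) = gaussianReal (β j) (((s j) ^ 2).toNNReal))
    (f : Fin N) (h : ℝ) (hh : h = (s f) ^ 2 / σβ ^ 2)
    (heq : ∀ j, (s j) ^ 2 / σβ ^ 2 = h) :
    variance (fun ω => y f ω / (1 + (s f) ^ 2 / σβ ^ 2)
        + (1 / (1 + σβ ^ 2 / (s f) ^ 2)) *
          ∑ j, ((σβ ^ 2 + (s j) ^ 2)⁻¹ /
              ((σμ ^ 2)⁻¹ + ∑ k, (σβ ^ 2 + (s k) ^ 2)⁻¹)) * y j ω) P ≤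
      (1 / (1 + h) ^ 2 + 2 / (h * (1 + 1 / h) ^ 2) + 1 / (1 + 1 / h) ^ 2) * (s f) ^ 2 := by
  have hsq : ∀ j, (0:ℝ) < (s j) ^ 2 := fun j => pow_pos (hs j) 2
  have hvne : ∀ j, ((s j) ^ 2).toNNReal ≠ 0 := fun j => by
    simp [Real.toNNReal_eq_zero, not_le, hsq j, (hs j).ne']
  have hvcoe : ∀ j, ((((s j) ^ 2).toNNReal : NNReal) : ℝ) = (s j) ^ 2 := fun j =>
    Real.coe_toNNReal _ (le_of_lt (hsq j))
  have hh0 : 0 < h := hh ▸ div_pos (hsq f) (pow_pos hσβ 2)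
  -- notation
  set D : ℝ := (σμ ^ 2)⁻¹ + ∑ k, (σβ ^ 2 + (s k) ^ 2)⁻¹ with hD
  have hDpos : 0 < D := by
    apply add_pos_of_pos_of_nonneg (by positivity)
    exact Finset.sum_nonneg fun k _ => by positivity
  set w : Fin N → ℝ := fun j => (σβ ^ 2 + (s j) ^ 2)⁻¹ / D with hw
  have hwnn : ∀ j, 0 ≤ w j := fun j => by
    apply div_nonneg _ (le_of_lt hDpos); positivity
  have hwsum : ∑ j, w j ≤ 1 := by
    rw [hw, ← Finset.sum_div]
    rw [div_le_one hDpos, hD]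
    nlinarith [sq_nonneg σμ, inv_nonneg.2 (le_of_lt (pow_pos hσμ 2))]
  set a : ℝ := (1 + (s f) ^ 2 / σβ ^ 2)⁻¹ with ha
  set b : ℝ := 1 / (1 + σβ ^ 2 / (s f) ^ 2) with hb
  have hann : 0 ≤ a := by rw [ha]; positivity
  have hbnn : 0 ≤ b := by rw [hb]; positivity
  set c : Fin N → ℝ := fun j => (if j = f then a else 0) + b * w j with hc
  -- rewrite the function as a sum
  have hfun : (fun ω => y f ω / (1 + (s f) ^ 2 / σβ ^ 2)
        + (1 / (1 + σβ ^ 2 / (s f) ^ 2)) * ∑ j, w j * y j ω)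
      = ∑ j, (fun ω => c j * y j ω) := by
    funext ω
    rw [Finset.sum_apply]
    simp only [hc, hw, hD, add_mul, Finset.sum_add_distrib, ite_mul, zero_mul,
      Finset.sum_ite_eq', Finset.mem_univ, if_true, Finset.mul_sum, div_eq_mul_inv]
    rw [ha, hb]
    ring_nf
    congr 1
    exact Finset.sum_congr rfl fun x _ => by ring
  rw [hfun]
  -- variance of the sum
  have hmem : ∀ j, MemLp (y j) 2 P := fun j => memℒp_of_map_gauss (hvne j) (hlaw j)
  have hvar : ∀ j, variance (y j) P = (s j) ^ 2 := fun j => by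
    rw [variance_of_map_gauss (hvne j) (hlaw j), hvcoe j]
  rw [IndepFun.variance_sum (fun i _ => (hmem i).const_mul (c i))
    (fun i _ j hj hij => by
      exact (hindep.indepFun hij).comp (measurable_const_mul (c i))
        (measurable_const_mul (c j)))]
  have hvm : ∀ j, variance (fun ω => c j * y j ω) P = c j ^ 2 * (s j) ^ 2 := fun j => by
    rw [variance_const_mul, hvar j]
  simp only [hvm]
  -- all s j equal s f
  have hseq : ∀ j, (s j) ^ 2 = (s f) ^ 2 := fun j => by
    have h1 := heq j; have h2 := heq f
    have hb2 : σβ ^ 2 ≠ 0 := ne_of_gt (pow_pos hσβ 2)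
    field_simp at h1 h2
    rw [h1, h2]
  have hsum : ∑ j, c j ^ 2 * (s j) ^ 2 = (∑ j, c j ^ 2) * (s f) ^ 2 := by
    rw [Finset.sum_mul]
    exact Finset.sum_congr rfl fun j _ => by rw [hseq j]
  rw [hsum]
  -- key inequality on coefficients
  apply mul_le_mul_of_nonneg_right _ (le_of_lt (hsq f))
  -- ∑ c j ^ 2 = a^2 + 2*a*b*w f + b^2 * ∑ w j ^2
  have hcsq : ∀ j, c j ^ 2 = (if j = f then a ^ 2 + 2 * a * (b * w j) else 0) + b ^ 2 * w j ^ 2 := by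
    intro j
    by_cases hj : j = f
    · simp only [hc, hj, if_true]; ring
    · simp only [hc, hj, if_false]; ring
  have hexp : ∑ j, c j ^ 2 = a ^ 2 + 2 * a * b * w f + b ^ 2 * ∑ j, w j ^ 2 := by
    simp only [hcsq, Finset.sum_add_distrib, Finset.sum_ite_eq', Finset.mem_univ, if_true,
      ← Finset.mul_sum]
    ring
  rw [hexp]
  -- identify a and b with h-expressions
  rw [heq f] at ha
  have hinvh : σβ ^ 2 / (s f) ^ 2 = 1 / h := by rw [hh, one_div_div]
  rw [hinvh] at hb
  have h1h : (1:ℝ) + h ≠ 0 := by positivity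
  have h1h' : (1:ℝ) + 1 / h ≠ 0 := by positivity
  have hRHS : 1 / (1 + h) ^ 2 + 2 / (h * (1 + 1 / h) ^ 2) + 1 / (1 + 1 / h) ^ 2
      = a ^ 2 + 2 * a * b + b ^ 2 := by
    rw [ha, hb]
    field_simp
    ring
  rw [hRHS]
  -- bounds
  have hwf : w f ≤ 1 :=
    le_trans (Finset.single_le_sum (fun j _ => hwnn j) (Finset.mem_univ f)) hwsum
  have hwsnn : 0 ≤ ∑ j, w j := Finset.sum_nonneg fun j _ => hwnn j
  have hw2 : ∑ j, w j ^ 2 ≤ 1 := by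
    have step1 : ∑ j, w j ^ 2 ≤ (∑ j, w j) * (∑ j, w j) := by
      rw [Finset.sum_mul]
      refine Finset.sum_le_sum fun j _ => ?_
      rw [pow_two]
      exact mul_le_mul_of_nonneg_left
        (Finset.single_le_sum (fun k _ => hwnn k) (Finset.mem_univ j)) (hwnn j)
    calc ∑ j, w j ^ 2 ≤ (∑ j, w j) * (∑ j, w j) := step1
      _ ≤ 1 * 1 := mul_le_mul hwsum hwsum hwsnn zero_le_one
      _ = 1 := by ring
  have hw2nn : 0 ≤ ∑ j, w j ^ 2 := Finset.sum_nonneg fun j _ => sq_nonneg (w j)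
  nlinarith [mul_le_of_le_one_right (mul_nonneg (mul_nonneg (by norm_num : (0:ℝ) ≤ 2) hann) hbnn) hwf,
    mul_le_of_le_one_right (sq_nonneg b) hw2, sq_nonneg b]
end

section
/- Bound on the off-diagonal terms in the variance estimate (equation (thm1_proof_4) in the proof of Theorem 3): let N_F ≥ 1, σ_β, σ_μ > 0, s_1,…,s_{N_F} > 0, fix f, and set h := s_f²/σ_β². If max_{j ≠ f} s_j²/σ_β² ≤ 1/h, then (1 + σ_β²/s_f²)^{-2} Σ_{j ≠ f} ((σ_β² + s_j²)^{-1} / (σ_μ^{-2} + Σ_{k=1}^{N_F}(σ_β² + s_k²)^{-1}))² s_j² ≤ s_f² / (h² (1 + 1/h)²). -/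
open Finset

/-- Bound on the off-diagonal terms in the variance estimate: with `h := s_f²/σβ²`, if
`s_j²/σβ² ≤ 1/h` for all `j ≠ f`, then
`(1 + σβ²/s_f²)⁻² Σ_{j ≠ f} ((σβ² + s_j²)⁻¹ / (σμ⁻² + Σ_k (σβ² + s_k²)⁻¹))² s_j²
  ≤ s_f² / (h² (1 + 1/h)²)`. -/
theorem offdiagonal_terms_bound
    (N : ℕ) (hN : 1 ≤ N) (σβ σμ : ℝ) (hσβ : 0 < σβ) (hσμ : 0 < σμ)
    (s : Fin N → ℝ) (hs : ∀ j, 0 < s j) (f : Fin N)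
    (h : ℝ) (hh : h = (s f) ^ 2 / σβ ^ 2)
    (hmax : ∀ j, j ≠ f → (s j) ^ 2 / σβ ^ 2 ≤ 1 / h) :
    ((1 + σβ ^ 2 / (s f) ^ 2) ^ 2)⁻¹ *
        ∑ j ∈ univ.erase f, ((σβ ^ 2 + (s j) ^ 2)⁻¹ /
            ((σμ ^ 2)⁻¹ + ∑ k, (σβ ^ 2 + (s k) ^ 2)⁻¹)) ^ 2 * (s j) ^ 2 ≤
      (s f) ^ 2 / (h ^ 2 * (1 + 1 / h) ^ 2) := by
  have hsf : 0 < (s f) ^ 2 := by have := hs f; positivity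
  have hσβ2 : 0 < σβ ^ 2 := by positivity
  have hhpos : 0 < h := by rw [hh]; positivity
  set a : Fin N → ℝ := fun j => (σβ ^ 2 + (s j) ^ 2)⁻¹ with ha
  have hapos : ∀ j, 0 < a j := fun j => by
    have := hs j
    simp only [ha]
    positivity
  set D : ℝ := (σμ ^ 2)⁻¹ + ∑ k, a k with hD
  have hDpos : 0 < D := by
    have h1 : 0 < (σμ ^ 2)⁻¹ := by positivity
    have h2 : 0 ≤ ∑ k, a k := Finset.sum_nonneg fun k _ => (hapos k).le
    rw [hD]; linarith
  have haD : ∀ j, a j ≤ D := by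
    intro j
    have h1 : a j ≤ ∑ k, a k :=
      Finset.single_le_sum (fun k _ => (hapos k).le) (Finset.mem_univ j)
    have h2 : 0 < (σμ ^ 2)⁻¹ := by positivity
    rw [hD]; linarith
  -- bound on each term
  have hterm : ∀ j ∈ univ.erase f,
      (a j / D) ^ 2 * (s j) ^ 2 ≤ (a j / D) * (σβ ^ 2 / h) := by
    intro j hj
    have hjf : j ≠ f := Finset.ne_of_mem_erase hj
    have hsj : (s j) ^ 2 ≤ σβ ^ 2 / h := by
      have := hmax j hjf
      rw [div_le_div_iff₀ (by positivity) hhpos] at this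
      rw [le_div_iff₀ hhpos]
      linarith [this]
    have hratio : a j / D ≤ 1 := div_le_one_of_le₀ (haD j) hDpos.le
    have hratio0 : 0 ≤ a j / D := div_nonneg (hapos j).le hDpos.le
    calc (a j / D) ^ 2 * (s j) ^ 2 ≤ (a j / D) ^ 2 * (σβ ^ 2 / h) := by
          apply mul_le_mul_of_nonneg_left hsj (by positivity)
      _ ≤ (a j / D) * (σβ ^ 2 / h) := by
          apply mul_le_mul_of_nonneg_right _ (by positivity)
          calc (a j / D) ^ 2 = (a j / D) * (a j / D) := sq (a j / D) ▸ sq (a j/D) ▸ by ring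
            _ ≤ 1 * (a j / D) := mul_le_mul_of_nonneg_right hratio hratio0
            _ = a j / D := one_mul _
  have hsum : ∑ j ∈ univ.erase f, (a j / D) ^ 2 * (s j) ^ 2 ≤ σβ ^ 2 / h := by
    calc ∑ j ∈ univ.erase f, (a j / D) ^ 2 * (s j) ^ 2
        ≤ ∑ j ∈ univ.erase f, (a j / D) * (σβ ^ 2 / h) :=
          Finset.sum_le_sum hterm
      _ = (∑ j ∈ univ.erase f, a j) / D * (σβ ^ 2 / h) := by
          rw [← Finset.sum_mul, ← Finset.sum_div]
      _ ≤ 1 * (σβ ^ 2 / h) := by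
          apply mul_le_mul_of_nonneg_right _ (by positivity)
          apply div_le_one_of_le₀ _ hDpos.le
          have h1 : ∑ j ∈ univ.erase f, a j ≤ ∑ k, a k :=
            Finset.sum_le_sum_of_subset_of_nonneg (Finset.erase_subset f univ)
              (fun k _ _ => (hapos k).le)
          have h2 : 0 < (σμ ^ 2)⁻¹ := by positivity
          rw [hD]; linarith
      _ = σβ ^ 2 / h := one_mul _
  have hpre : 0 ≤ ((1 + σβ ^ 2 / (s f) ^ 2) ^ 2)⁻¹ := by positivity
  calc ((1 + σβ ^ 2 / (s f) ^ 2) ^ 2)⁻¹ *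
        ∑ j ∈ univ.erase f, (a j / D) ^ 2 * (s j) ^ 2
      ≤ ((1 + σβ ^ 2 / (s f) ^ 2) ^ 2)⁻¹ * (σβ ^ 2 / h) :=
        mul_le_mul_of_nonneg_left hsum hpre
    _ = (s f) ^ 2 / (h ^ 2 * (1 + 1 / h) ^ 2) := by
        subst hh
        have hσβ' : σβ ^ 2 ≠ 0 := ne_of_gt hσβ2
        have hsf' : (s f) ^ 2 ≠ 0 := ne_of_gt hsf
        have hfac : (s f) ^ 2 + σβ ^ 2 ≠ 0 := by positivity
        field_simp
end
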